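/- Let 𝔽 be ℝ or ℂ and n ≥ 1. Let T : 𝔽ⁿ → 𝔽ⁿ be a linear map, where 𝔽ⁿ is equipped with the ℓ₁-norm, and identify T with its matrix (t_{ij}). Then T preserves parallel pairs (i.e., (Tx, Ty) is a parallel pair whenever (x, y) is a parallel pair) if and only if each row of T has at most one nonzero entry, or T = v uᵗ for some column vectors u, v ∈ 𝔽ⁿ (i.e., Tx = (uᵗx) v for all x). -/

import Mathlib

open scoped ENNReal

/-- Two vectors in a normed space over `𝕜` form a *parallel pair* if
`‖x + μ • y‖ = ‖x‖ + ‖y‖` for some scalar `μ` with `|μ| = 1`. -/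
def ParallelPair (𝕜 : Type*) {E : Type*} [RCLike 𝕜] [NormedAddCommGroup E] [NormedSpace 𝕜 E]
    (x y : E) : Prop :=
  ∃ μ : 𝕜, ‖μ‖ = 1 ∧ ‖x + μ • y‖ = ‖x‖ + ‖y‖

namespace L1PP

variable {𝕜 : Type*} [RCLike 𝕜] {n : ℕ}

open RCLike in
lemma mu_eq {z w μ : 𝕜} (hz : z ≠ 0) (hw : w ≠ 0) (hμ : ‖μ‖ = 1)
    (h : ‖z + μ * w‖ = ‖z‖ + ‖w‖) : μ * w * (‖z‖ : 𝕜) = z * (‖w‖ : 𝕜) := by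
  set v := μ * w with hv
  have hvz : v ≠ 0 := mul_ne_zero (by rintro rfl; simp at hμ) hw
  have hnv : ‖v‖ = ‖w‖ := by rw [hv, norm_mul, hμ, one_mul]
  have h' : ‖z + v‖ = ‖z‖ + ‖v‖ := by rw [hnv]; exact h
  have hsq : ‖z + v‖ ^ 2 = ‖z‖ ^ 2 + 2 * re (inner 𝕜 z v) + ‖v‖ ^ 2 := norm_add_sq z v
  rw [h'] at hsq
  simp only [RCLike.inner_apply'] at hsq
  have hre : re ((starRingEnd 𝕜) z * v) = ‖z‖ * ‖v‖ := by nlinarith [hsq]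
  have hnorm : ‖(starRingEnd 𝕜) z * v‖ = ‖z‖ * ‖v‖ := by
    rw [norm_mul, norm_conj]
  have him : im ((starRingEnd 𝕜) z * v) = 0 := by
    have h2 : ‖(starRingEnd 𝕜) z * v‖ ^ 2 = re ((starRingEnd 𝕜) z * v) * re ((starRingEnd 𝕜) z * v) + im ((starRingEnd 𝕜) z * v) * im ((starRingEnd 𝕜) z * v) :=
      RCLike.norm_sq_eq_def
    rw [hnorm, hre] at h2
    nlinarith [h2]
  have hval : (starRingEnd 𝕜) z * v = ((‖z‖ * ‖v‖ : ℝ) : 𝕜) := by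
    apply RCLike.ext <;> simp [hre, him]
  have hz2 : z * ((starRingEnd 𝕜) z * v) = z * ((‖z‖ * ‖v‖ : ℝ) : 𝕜) := by rw [hval]
  rw [← mul_assoc, RCLike.mul_conj] at hz2
  have hzn : (‖z‖ : ℝ) ≠ 0 := norm_ne_zero_iff.mpr hz
  have key : (‖z‖:𝕜) * (v * (‖z‖:𝕜)) = (‖z‖:𝕜) * (z * (‖w‖:𝕜)) := by
    push_cast at hz2 ⊢
    rw [← hnv]; ring_nf; ring_nf at hz2; linear_combination hz2
  have hzc : (‖z‖:𝕜) ≠ 0 := by exact_mod_cast (RCLike.ofReal_ne_zero).mpr hzn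
  exact mul_left_cancel₀ hzc key

lemma force_one {μ z : 𝕜} (hz : z ≠ 0) (hμ : ‖μ‖ = 1)
    (h : ‖z + μ * z‖ = ‖z‖ + ‖z‖) : μ = 1 := by
  have m := mu_eq hz hz hμ h
  have hn : (‖z‖:𝕜) ≠ 0 := by
    exact (RCLike.ofReal_ne_zero (K := 𝕜)).mpr (norm_ne_zero_iff.mpr hz)
  have h2 := mul_right_cancel₀ hn m
  exact mul_right_cancel₀ hz (h2.trans (one_mul z).symm)

lemma force_neg {μ z : 𝕜} (hz : z ≠ 0) (hμ : ‖μ‖ = 1)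
    (h : ‖z + μ * (-z)‖ = ‖z‖ + ‖(-z)‖) : μ = -1 := by
  have m := mu_eq hz (neg_ne_zero.mpr hz) hμ h
  rw [norm_neg] at m
  have hn : (‖z‖:𝕜) ≠ 0 := by
    exact (RCLike.ofReal_ne_zero (K := 𝕜)).mpr (norm_ne_zero_iff.mpr hz)
  have h1 : (μ * -z) = z := mul_right_cancel₀ hn m
  have : μ * -z = -μ * z := by ring
  rw [this] at h1
  have := mul_right_cancel₀ hz (h1.trans (one_mul z).symm)
  linear_combination -this

lemma norm1 (x : PiLp 1 (fun _ : Fin n => 𝕜)) : ‖x‖ = ∑ i, ‖x i‖ := by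
  rw [PiLp.norm_eq_sum (by norm_num : 0 < (1 : ℝ≥0∞).toReal)]
  simp

lemma pp_of_pointwise {x y : PiLp 1 (fun _ : Fin n => 𝕜)} {μ : 𝕜} (hμ : ‖μ‖ = 1)
    (h : ∀ i, ‖x i + μ * y i‖ = ‖x i‖ + ‖y i‖) : ParallelPair 𝕜 x y := by
  refine ⟨μ, hμ, ?_⟩
  rw [norm1, norm1, norm1, ← Finset.sum_add_distrib]
  refine Finset.sum_congr rfl fun i _ => ?_
  have hi : (x + μ • y) i = x i + μ * y i := rfl
  rw [hi, h i]

lemma pointwise_of_pp {x y : PiLp 1 (fun _ : Fin n => 𝕜)} (h : ParallelPair 𝕜 x y) :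
    ∃ μ : 𝕜, ‖μ‖ = 1 ∧ ∀ i, ‖x i + μ * y i‖ = ‖x i‖ + ‖y i‖ := by
  obtain ⟨μ, hμ, hsum⟩ := h
  refine ⟨μ, hμ, ?_⟩
  rw [norm1, norm1, norm1, ← Finset.sum_add_distrib] at hsum
  have hle : ∀ i ∈ Finset.univ, ‖(x + μ • y) i‖ ≤ ‖x i‖ + ‖y i‖ := by
    intro i _
    have hi : (x + μ • y) i = x i + μ * y i := rfl
    rw [hi]
    calc ‖x i + μ * y i‖ ≤ ‖x i‖ + ‖μ * y i‖ := norm_add_le _ _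
    _ = ‖x i‖ + ‖y i‖ := by rw [norm_mul, hμ, one_mul]
  have hall := (Finset.sum_eq_sum_iff_of_le hle).mp hsum
  intro i
  have h2 := hall i (Finset.mem_univ i)
  have hi : (x + μ • y) i = x i + μ * y i := rfl
  rw [hi] at h2
  exact h2

lemma ray_aux (r : ℝ) (hr : 0 ≤ r) (a : 𝕜) : ‖a + (r:𝕜)*a‖ = ‖a‖ + ‖(r:𝕜)*a‖ := by
  rw [show a + (r:𝕜)*a = ((1+r : ℝ) : 𝕜) * a by push_cast; ring, norm_mul, norm_mul,
    RCLike.norm_ofReal, RCLike.norm_ofReal, abs_of_nonneg hr, abs_of_nonneg (by linarith)]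
  ring

lemma ray_norm_add {z w : 𝕜} (h : ∃ r : ℝ, 0 ≤ r ∧ (w = r • z ∨ z = r • w)) :
    ‖z + w‖ = ‖z‖ + ‖w‖ := by
  obtain ⟨r, hr, h | h⟩ := h <;> subst h <;> rw [RCLike.real_smul_eq_coe_mul]
  · exact ray_aux r hr z
  · rw [show ((r:𝕜)*w + w) = w + (r:𝕜)*w from add_comm _ _, ray_aux r hr w, add_comm]

section
variable (T : PiLp 1 (fun _ : Fin n => 𝕜) →ₗ[𝕜] PiLp 1 (fun _ : Fin n => 𝕜))
    (t : Matrix (Fin n) (Fin n) 𝕜)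

lemma conflict2
    (ht : ∀ (x : PiLp 1 (fun _ : Fin n => 𝕜)) (i : Fin n), T x i = ∑ j, t i j * x j)
    (hpres : ∀ x y : PiLp 1 (fun _ : Fin n => 𝕜),
        ParallelPair 𝕜 x y → ParallelPair 𝕜 (T x) (T y))
    {p q : Fin n} (hpq : p ≠ q) (α β α' β' : 𝕜)
    (hα : ∃ r : ℝ, 0 ≤ r ∧ (α' = r • α ∨ α = r • α'))
    (hβ : ∃ r : ℝ, 0 ≤ r ∧ (β' = r • β ∨ β = r • β')) :
    ∃ μ : 𝕜, ‖μ‖ = 1 ∧ ∀ i,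
      ‖(t i p * α + t i q * β) + μ * (t i p * α' + t i q * β')‖ =
        ‖t i p * α + t i q * β‖ + ‖t i p * α' + t i q * β'‖ := by
  classical
  set x : PiLp 1 (fun _ : Fin n => 𝕜) :=
    WithLp.toLp 1 (fun j => (if j = p then α else 0) + (if j = q then β else 0)) with hx
  set y : PiLp 1 (fun _ : Fin n => 𝕜) :=
    WithLp.toLp 1 (fun j => (if j = p then α' else 0) + (if j = q then β' else 0)) with hy
  have hTx : ∀ (γ δ : 𝕜) (i : Fin n),
      T (WithLp.toLp 1 (fun j => (if j = p then γ else 0) + (if j = q then δ else 0)) :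
          PiLp 1 (fun _ : Fin n => 𝕜)) i = t i p * γ + t i q * δ := by
    intro γ δ i
    rw [ht]
    have hsplit : ∀ j : Fin n, t i j * ((if j = p then γ else 0) + (if j = q then δ else 0)) =
        (if j = p then t i j * γ else 0) + (if j = q then t i j * δ else 0) := by
      intro j; split <;> split <;> ring
    simp only [WithLp.ofLp_toLp, hsplit, Finset.sum_add_distrib, Finset.sum_ite_eq', Finset.mem_univ, if_true]
  have hxy : ParallelPair 𝕜 x y := by
    refine pp_of_pointwise (μ := (1:𝕜)) norm_one fun i => ?_
    rw [one_mul]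
    by_cases hip : i = p
    · subst hip
      have h1 : x i = α := by rw [hx]; simp [hpq]
      have h2 : y i = α' := by rw [hy]; simp [hpq]
      rw [h1, h2]; exact ray_norm_add hα
    · by_cases hiq : i = q
      · subst hiq
        have h1 : x i = β := by rw [hx]; simp [Ne.symm hpq]
        have h2 : y i = β' := by rw [hy]; simp [Ne.symm hpq]
        rw [h1, h2]; exact ray_norm_add hβ
      · have h1 : x i = 0 := by rw [hx]; simp [hip, hiq]
        have h2 : y i = 0 := by rw [hy]; simp [hip, hiq]
        rw [h1, h2]; simp
  obtain ⟨μ, hμ, hpt⟩ := pointwise_of_pp (hpres x y hxy)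
  refine ⟨μ, hμ, fun i => ?_⟩
  have e1 : T x i = t i p * α + t i q * β := hTx α β i
  have e2 : T y i = t i p * α' + t i q * β' := hTx α' β' i
  have h3 := hpt i
  rw [e1, e2] at h3
  exact h3


lemma eval2 {a b : 𝕜} (ha : a ≠ 0) (hb : b ≠ 0) (A B : 𝕜) :
    a * (A * a⁻¹) + b * (B * b⁻¹) = A + B := by field_simp

lemma L1
    (ht : ∀ (x : PiLp 1 (fun _ : Fin n => 𝕜)) (i : Fin n), T x i = ∑ j, t i j * x j)
    (hpres : ∀ x y : PiLp 1 (fun _ : Fin n => 𝕜),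
        ParallelPair 𝕜 x y → ParallelPair 𝕜 (T x) (T y))
    {i₀ p q : Fin n} (hpq : p ≠ q) (ha : t i₀ p ≠ 0) (hb : t i₀ q ≠ 0) :
    ∀ i₁, t i₁ q * t i₀ p = t i₁ p * t i₀ q := by
  intro i₁
  by_contra hne
  by_cases hc : t i₁ p = 0
  · -- column-p entry at i₁ vanishes; then d ≠ 0
    have hd : t i₁ q ≠ 0 := by
      intro h; exact hne (by rw [hc, h]; ring)
    obtain ⟨μ, hμ, hpt⟩ := conflict2 T t ht hpres hpq 0 (t i₀ q)⁻¹
      (-(2 * (t i₀ p)⁻¹)) (t i₀ q)⁻¹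
      ⟨0, le_rfl, Or.inr (by simp)⟩ ⟨1, zero_le_one, Or.inl (by simp)⟩
    have h0 := hpt i₀
    have h1 := hpt i₁
    rw [show t i₀ p * 0 + t i₀ q * (t i₀ q)⁻¹ = 1 by field_simp; ring,
      show t i₀ p * (-(2 * (t i₀ p)⁻¹)) + t i₀ q * (t i₀ q)⁻¹ = -1 by field_simp; ring] at h0
    have hμ1 : μ = -1 := force_neg one_ne_zero hμ h0
    rw [show t i₁ p * 0 + t i₁ q * (t i₀ q)⁻¹ = t i₁ q * (t i₀ q)⁻¹ by ring,
      show t i₁ p * (-(2 * (t i₀ p)⁻¹)) + t i₁ q * (t i₀ q)⁻¹ = t i₁ q * (t i₀ q)⁻¹ by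
        rw [hc]; ring] at h1
    have hμ2 : μ = 1 := force_one (mul_ne_zero hd (inv_ne_zero hb)) hμ h1
    rw [hμ2] at hμ1
    norm_num at hμ1
  · by_cases hdz : t i₁ q = 0
    · obtain ⟨μ, hμ, hpt⟩ := conflict2 T t ht hpres hpq (t i₀ p)⁻¹ 0
        (t i₀ p)⁻¹ (-(2 * (t i₀ q)⁻¹))
        ⟨1, zero_le_one, Or.inl (by simp)⟩ ⟨0, le_rfl, Or.inr (by simp)⟩
      have h0 := hpt i₀
      have h1 := hpt i₁
      rw [show t i₀ p * (t i₀ p)⁻¹ + t i₀ q * 0 = 1 by field_simp; ring,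
        show t i₀ p * (t i₀ p)⁻¹ + t i₀ q * (-(2 * (t i₀ q)⁻¹)) = -1 by field_simp; ring] at h0
      have hμ1 : μ = -1 := force_neg one_ne_zero hμ h0
      rw [show t i₁ p * (t i₀ p)⁻¹ + t i₁ q * 0 = t i₁ p * (t i₀ p)⁻¹ by ring,
        show t i₁ p * (t i₀ p)⁻¹ + t i₁ q * (-(2 * (t i₀ q)⁻¹)) = t i₁ p * (t i₀ p)⁻¹ by
          rw [hdz]; ring] at h1
      have hμ2 : μ = 1 := force_one (mul_ne_zero hc (inv_ne_zero ha)) hμ h1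
      rw [hμ2] at hμ1
      norm_num at hμ1
    · -- both entries of row i₁ nonzero
      obtain ⟨P, hPdef⟩ : ∃ z : 𝕜, z = t i₁ p * (t i₀ p)⁻¹ := ⟨_, rfl⟩
      obtain ⟨Q, hQdef⟩ : ∃ z : 𝕜, z = t i₁ q * (t i₀ q)⁻¹ := ⟨_, rfl⟩
      have hP : P ≠ 0 := by rw [hPdef]; exact mul_ne_zero hc (inv_ne_zero ha)
      have hQ : Q ≠ 0 := by rw [hQdef]; exact mul_ne_zero hdz (inv_ne_zero hb)
      have hPQ : Q ≠ P := by
        intro h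
        apply hne
        rw [hQdef, hPdef] at h
        field_simp at h
        linear_combination h <;> skip
      by_cases himz : RCLike.im (Q * (starRingEnd 𝕜) P) = 0
      · -- ratio is real
        have hZ : Q * (starRingEnd 𝕜) P = ((RCLike.re (Q * (starRingEnd 𝕜) P) : ℝ) : 𝕜) := by
          apply RCLike.ext <;> simp [himz]
        have hPn : (‖P‖:ℝ) ≠ 0 := norm_ne_zero_iff.mpr hP
        have hPnk : ((‖P‖:ℝ):𝕜) ≠ 0 := RCLike.ofReal_ne_zero.mpr hPn
        set κ : ℝ := RCLike.re (Q * (starRingEnd 𝕜) P) / ‖P‖^2 with hκdef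
        have hQP : Q = ((κ:ℝ):𝕜) * P := by
          have h1 : Q * ((‖P‖:ℝ):𝕜)^2 = ((RCLike.re (Q * (starRingEnd 𝕜) P):ℝ):𝕜) * P := by
            conv_lhs => rw [show ((‖P‖:ℝ):𝕜)^2 = (starRingEnd 𝕜) P * P from (RCLike.conj_mul P).symm,
              ← mul_assoc, hZ]
          rw [hκdef]
          push_cast
          rw [div_mul_eq_mul_div, eq_div_iff (pow_ne_zero 2 hPnk)]
          linear_combination h1
        have hκ0 : κ ≠ 0 := by
          intro h; rw [h] at hQP; simp at hQP; exact hQ hQP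
        have hκ1 : κ ≠ 1 := by
          intro h; rw [h] at hQP; simp at hQP; exact hPQ hQP
        have hκm : κ - 1 ≠ 0 := sub_ne_zero.mpr hκ1
        set t' : ℝ := min |κ| 1 / 2 with ht'def
        have habs : 0 < |κ| := abs_pos.mpr hκ0
        have hmin : 0 < min |κ| 1 := lt_min habs one_pos
        have ht'0 : 0 < t' := by rw [ht'def]; linarith
        have ht'1 : t' < 1 := by
          have := min_le_right |κ| 1; rw [ht'def]; linarith
        have ht'κ : t' < |κ| := by
          have := min_le_left |κ| 1; rw [ht'def]; linarith
        have hsq : t' ^ 2 < κ ^ 2 := by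
          have h1 : t' ^ 2 < |κ| ^ 2 := by nlinarith
          rw [sq_abs] at h1; exact h1
        have hκt : κ - t' ≠ 0 := by intro h; nlinarith
        have hκt2 : κ + t' ≠ 0 := by intro h; nlinarith
        set X : ℝ := (κ - t')/(κ-1) with hX
        set Y : ℝ := (t'-1)/(κ-1) with hY
        set X' : ℝ := (κ+t')/(κ-1) with hX'
        set Y' : ℝ := (-t'-1)/(κ-1) with hY'
        obtain ⟨μ, hμ, hpt⟩ := conflict2 T t ht hpres hpq
          (((X:ℝ):𝕜) * (t i₀ p)⁻¹) (((Y:ℝ):𝕜) * (t i₀ q)⁻¹)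
          (((X':ℝ):𝕜) * (t i₀ p)⁻¹) (((Y':ℝ):𝕜) * (t i₀ q)⁻¹)
          ⟨(κ+t')/(κ-t'), by
              have hrw : (κ+t')/(κ-t') = (κ^2 - t'^2)/((κ-t')^2) := by
                field_simp; ring
              rw [hrw]
              exact div_nonneg (by nlinarith) (sq_nonneg _),
            Or.inl (by
              rw [RCLike.real_smul_eq_coe_mul, ← mul_assoc]
              congr 1
              rw [show ((((κ+t')/(κ-t') : ℝ)):𝕜) * ((X:ℝ):𝕜) = ((((κ+t')/(κ-t') * X : ℝ)):𝕜) by push_cast; ring]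
              congr 1
              rw [hX, hX']
              field_simp <;> ring)⟩
          ⟨(1+t')/(1-t'), div_nonneg (by linarith) (by linarith),
            Or.inl (by
              rw [RCLike.real_smul_eq_coe_mul, ← mul_assoc]
              congr 1
              rw [show ((((1+t')/(1-t') : ℝ)):𝕜) * ((Y:ℝ):𝕜) = ((((1+t')/(1-t') * Y : ℝ)):𝕜) by push_cast; ring]
              congr 1
              rw [hY, hY']
              have h1t : (1:ℝ) - t' ≠ 0 := by linarith
              field_simp <;> ring)⟩
        have h0 := hpt i₀
        have h1 := hpt i₁
        have v0 : t i₀ p * (((X:ℝ):𝕜) * (t i₀ p)⁻¹) + t i₀ q * (((Y:ℝ):𝕜) * (t i₀ q)⁻¹) = 1 := by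
          rw [eval2 ha hb, ← RCLike.ofReal_add, show X + Y = 1 by rw [hX, hY]; field_simp <;> ring,
            RCLike.ofReal_one]
        have w0 : t i₀ p * (((X':ℝ):𝕜) * (t i₀ p)⁻¹) + t i₀ q * (((Y':ℝ):𝕜) * (t i₀ q)⁻¹) = 1 := by
          rw [eval2 ha hb, ← RCLike.ofReal_add, show X' + Y' = 1 by rw [hX', hY']; field_simp <;> ring,
            RCLike.ofReal_one]
        rw [v0, w0] at h0
        have hμ1 : μ = 1 := force_one one_ne_zero hμ h0
        have v1 : t i₁ p * (((X:ℝ):𝕜) * (t i₀ p)⁻¹) + t i₁ q * (((Y:ℝ):𝕜) * (t i₀ q)⁻¹)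
            = ((t':ℝ):𝕜) * P := by
          rw [show t i₁ p * (((X:ℝ):𝕜) * (t i₀ p)⁻¹) + t i₁ q * (((Y:ℝ):𝕜) * (t i₀ q)⁻¹)
              = ((X:ℝ):𝕜) * P + ((Y:ℝ):𝕜) * Q by rw [hPdef, hQdef]; ring, hQP,
            show ((X:ℝ):𝕜) * P + ((Y:ℝ):𝕜) * (((κ:ℝ):𝕜) * P) = (((X + κ * Y :ℝ)):𝕜) * P by
              push_cast; ring]
          congr 2
          rw [hX, hY]; field_simp <;> ring
        have w1 : t i₁ p * (((X':ℝ):𝕜) * (t i₀ p)⁻¹) + t i₁ q * (((Y':ℝ):𝕜) * (t i₀ q)⁻¹)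
            = -(((t':ℝ):𝕜) * P) := by
          rw [show t i₁ p * (((X':ℝ):𝕜) * (t i₀ p)⁻¹) + t i₁ q * (((Y':ℝ):𝕜) * (t i₀ q)⁻¹)
              = ((X':ℝ):𝕜) * P + ((Y':ℝ):𝕜) * Q by rw [hPdef, hQdef]; ring, hQP,
            show ((X':ℝ):𝕜) * P + ((Y':ℝ):𝕜) * (((κ:ℝ):𝕜) * P) = (((X' + κ * Y' :ℝ)):𝕜) * P by
              push_cast; ring,
            show (X' + κ * Y' : ℝ) = -t' by rw [hX', hY']; field_simp <;> ring]
          push_cast; ring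
        rw [v1, w1] at h1
        have hz : ((t':ℝ):𝕜) * P ≠ 0 :=
          mul_ne_zero (RCLike.ofReal_ne_zero.mpr (ne_of_gt ht'0)) hP
        have hμ2 : μ = -1 := force_neg hz hμ h1
        rw [hμ1] at hμ2
        norm_num at hμ2
      · -- ratio is not real
        obtain ⟨h2, hh2⟩ : ∃ z : 𝕜, z = ((2⁻¹:ℝ):𝕜) := ⟨_, rfl⟩
        obtain ⟨μ, hμ, hpt⟩ := conflict2 T t ht hpres hpq
          ((t i₀ p)⁻¹) (h2 * (t i₀ q)⁻¹) (h2 * (t i₀ p)⁻¹) ((t i₀ q)⁻¹)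
          ⟨2⁻¹, by norm_num, Or.inl (by rw [RCLike.real_smul_eq_coe_mul, hh2])⟩
          ⟨2⁻¹, by norm_num, Or.inr (by rw [RCLike.real_smul_eq_coe_mul, hh2])⟩
        have h0 := hpt i₀
        have h1 := hpt i₁
        have hS : ((1:𝕜) + h2) ≠ 0 := by
          rw [hh2, show (1:𝕜) + ((2⁻¹:ℝ):𝕜) = (((3/2 : ℝ)):𝕜) by push_cast; norm_num]
          exact RCLike.ofReal_ne_zero.mpr (by norm_num)
        have v0 : t i₀ p * (t i₀ p)⁻¹ + t i₀ q * (h2 * (t i₀ q)⁻¹) = 1 + h2 := by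
          field_simp
        have w0 : t i₀ p * (h2 * (t i₀ p)⁻¹) + t i₀ q * (t i₀ q)⁻¹ = 1 + h2 := by
          field_simp <;> ring
        rw [v0, w0] at h0
        have hμ1 : μ = 1 := force_one hS hμ h0
        -- coordinate i₁ values
        obtain ⟨U, hU⟩ : ∃ z : 𝕜, z = P + h2 * Q := ⟨_, rfl⟩
        obtain ⟨W, hW⟩ : ∃ z : 𝕜, z = h2 * P + Q := ⟨_, rfl⟩
        have v1 : t i₁ p * (t i₀ p)⁻¹ + t i₁ q * (h2 * (t i₀ q)⁻¹) = U := by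
          rw [hU, hPdef, hQdef]; ring
        have w1 : t i₁ p * (h2 * (t i₀ p)⁻¹) + t i₁ q * (t i₀ q)⁻¹ = W := by
          rw [hW, hPdef, hQdef]; ring
        rw [v1, w1] at h1
        have hUne : U ≠ 0 := by
          intro h
          apply himz
          have hPv : P = -(h2 * Q) := by rw [hU] at h; linear_combination h
          have e : Q * (starRingEnd 𝕜) P = ((-(2⁻¹ * ‖Q‖^2) : ℝ) : 𝕜) := by
            rw [hPv, hh2]
            rw [show (starRingEnd 𝕜) (-(((2⁻¹:ℝ):𝕜) * Q)) = -(((2⁻¹:ℝ):𝕜) * (starRingEnd 𝕜) Q) by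
              rw [map_neg, map_mul, RCLike.conj_ofReal]]
            rw [show Q * -(((2⁻¹:ℝ):𝕜) * (starRingEnd 𝕜) Q) =
              -(((2⁻¹:ℝ):𝕜) * (Q * (starRingEnd 𝕜) Q)) by ring, RCLike.mul_conj]
            push_cast; ring
          rw [e, RCLike.ofReal_im]
        have hWne : W ≠ 0 := by
          intro h
          apply himz
          have hQv : Q = -(h2 * P) := by rw [hW] at h; linear_combination h
          have e : Q * (starRingEnd 𝕜) P = ((-(2⁻¹ * ‖P‖^2) : ℝ) : 𝕜) := by
            rw [hQv, hh2,
              show -(((2⁻¹:ℝ):𝕜) * P) * (starRingEnd 𝕜) P =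
                -(((2⁻¹:ℝ):𝕜) * (P * (starRingEnd 𝕜) P)) by ring, RCLike.mul_conj]
            push_cast; ring
          rw [e, RCLike.ofReal_im]
        have m := mu_eq hUne hWne hμ h1
        rw [hμ1, one_mul] at m
        -- multiply by conj U and take imaginary parts
        have m2 : (W * (starRingEnd 𝕜) U) * ((‖U‖:ℝ):𝕜) = ((‖U‖:𝕜)^2) * ((‖W‖:ℝ):𝕜) := by
          have e : (U * ((‖W‖:ℝ):𝕜)) * (starRingEnd 𝕜) U = (U * (starRingEnd 𝕜) U) * ((‖W‖:ℝ):𝕜) := by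
            ring
          calc (W * (starRingEnd 𝕜) U) * ((‖U‖:ℝ):𝕜)
              = (W * ((‖U‖:ℝ):𝕜)) * (starRingEnd 𝕜) U := by ring
            _ = (U * ((‖W‖:ℝ):𝕜)) * (starRingEnd 𝕜) U := by rw [m]
            _ = (U * (starRingEnd 𝕜) U) * ((‖W‖:ℝ):𝕜) := e
            _ = ((‖U‖:𝕜)^2) * ((‖W‖:ℝ):𝕜) := by rw [RCLike.mul_conj]
        have m3 : RCLike.im (W * (starRingEnd 𝕜) U) * ‖U‖ = 0 := by
          have := congrArg RCLike.im m2
          rw [show (W * (starRingEnd 𝕜) U) * ((‖U‖:ℝ):𝕜) = ((‖U‖:ℝ):𝕜) * (W * (starRingEnd 𝕜) U) from mul_comm _ _,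
            RCLike.im_ofReal_mul,
            show ((‖U‖:𝕜)^2) * ((‖W‖:ℝ):𝕜) = ((‖U‖^2 * ‖W‖ : ℝ):𝕜) by push_cast; ring,
            RCLike.ofReal_im] at this
          linarith [this]
        have hUn : (‖U‖:ℝ) ≠ 0 := norm_ne_zero_iff.mpr hUne
        have m4 : RCLike.im (W * (starRingEnd 𝕜) U) = 0 := by
          rcases mul_eq_zero.mp m3 with h | h
          · exact h
          · exact absurd h hUn
        -- but the imaginary part equals (3/4) im (Q conj P) ≠ 0
        have key : RCLike.im (W * (starRingEnd 𝕜) U) = (3/4) * RCLike.im (Q * (starRingEnd 𝕜) P) := by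
          have hconjU : (starRingEnd 𝕜) U = (starRingEnd 𝕜) P + h2 * (starRingEnd 𝕜) Q := by
            rw [hU, hh2, map_add, map_mul, RCLike.conj_ofReal]
          have him1 : RCLike.im (P * (starRingEnd 𝕜) Q) = - RCLike.im (Q * (starRingEnd 𝕜) P) := by
            rw [show P * (starRingEnd 𝕜) Q = (starRingEnd 𝕜) (Q * (starRingEnd 𝕜) P) by
              rw [map_mul, RCLike.conj_conj]; ring, RCLike.conj_im]
          have e2 : W * (starRingEnd 𝕜) U
              = ((2⁻¹ * ‖P‖^2 : ℝ):𝕜) + (((4:ℝ)⁻¹ :ℝ):𝕜) * (P * (starRingEnd 𝕜) Q)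
                + Q * (starRingEnd 𝕜) P + ((2⁻¹ * ‖Q‖^2 : ℝ):𝕜) := by
            rw [hconjU, hW, hh2]
            rw [show (((2⁻¹:ℝ):𝕜) * P + Q) * ((starRingEnd 𝕜) P + ((2⁻¹:ℝ):𝕜) * (starRingEnd 𝕜) Q)
                = ((2⁻¹:ℝ):𝕜) * (P * (starRingEnd 𝕜) P)
                  + (((2⁻¹:ℝ):𝕜) * ((2⁻¹:ℝ):𝕜)) * (P * (starRingEnd 𝕜) Q)
                  + Q * (starRingEnd 𝕜) P + ((2⁻¹:ℝ):𝕜) * (Q * (starRingEnd 𝕜) Q) from by ring,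
              RCLike.mul_conj, RCLike.mul_conj]
            push_cast
            ring
          rw [e2]
          simp only [map_add, RCLike.ofReal_im, RCLike.im_ofReal_mul, him1]
          ring
        rw [key] at m4
        have : RCLike.im (Q * (starRingEnd 𝕜) P) = 0 := by linarith
        exact himz this


lemma conflict3
    (ht : ∀ (x : PiLp 1 (fun _ : Fin n => 𝕜)) (i : Fin n), T x i = ∑ j, t i j * x j)
    (hpres : ∀ x y : PiLp 1 (fun _ : Fin n => 𝕜),
        ParallelPair 𝕜 x y → ParallelPair 𝕜 (T x) (T y))
    {p q k : Fin n} (hpq : p ≠ q) (hkp : k ≠ p) (hkq : k ≠ q)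
    (α β γ α' β' γ' : 𝕜)
    (hα : ∃ r : ℝ, 0 ≤ r ∧ (α' = r • α ∨ α = r • α'))
    (hβ : ∃ r : ℝ, 0 ≤ r ∧ (β' = r • β ∨ β = r • β'))
    (hγ : ∃ r : ℝ, 0 ≤ r ∧ (γ' = r • γ ∨ γ = r • γ')) :
    ∃ μ : 𝕜, ‖μ‖ = 1 ∧ ∀ i,
      ‖(t i p * α + t i q * β + t i k * γ) + μ * (t i p * α' + t i q * β' + t i k * γ')‖ =
        ‖t i p * α + t i q * β + t i k * γ‖ + ‖t i p * α' + t i q * β' + t i k * γ'‖ := by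
  classical
  set x : PiLp 1 (fun _ : Fin n => 𝕜) :=
    WithLp.toLp 1 (fun j => (if j = p then α else 0) + (if j = q then β else 0) + (if j = k then γ else 0)) with hx
  set y : PiLp 1 (fun _ : Fin n => 𝕜) :=
    WithLp.toLp 1 (fun j => (if j = p then α' else 0) + (if j = q then β' else 0) + (if j = k then γ' else 0)) with hy
  have hTx : ∀ (A B C : 𝕜) (i : Fin n),
      T (WithLp.toLp 1 (fun j => (if j = p then A else 0) + (if j = q then B else 0) + (if j = k then C else 0)) :
          PiLp 1 (fun _ : Fin n => 𝕜)) i = t i p * A + t i q * B + t i k * C := by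
    intro A B C i
    rw [ht]
    have hsplit : ∀ j : Fin n,
        t i j * ((if j = p then A else 0) + (if j = q then B else 0) + (if j = k then C else 0)) =
        (if j = p then t i j * A else 0) + (if j = q then t i j * B else 0)
          + (if j = k then t i j * C else 0) := by
      intro j; split <;> split <;> split <;> ring
    simp only [WithLp.ofLp_toLp, hsplit, Finset.sum_add_distrib, Finset.sum_ite_eq', Finset.mem_univ, if_true]
  have hxy : ParallelPair 𝕜 x y := by
    refine pp_of_pointwise (μ := (1:𝕜)) norm_one fun i => ?_
    rw [one_mul]
    by_cases hip : i = p
    · subst hip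
      have h1 : x i = α := by rw [hx]; simp [hpq, Ne.symm hkp]
      have h2 : y i = α' := by rw [hy]; simp [hpq, Ne.symm hkp]
      rw [h1, h2]; exact ray_norm_add hα
    · by_cases hiq : i = q
      · subst hiq
        have h1 : x i = β := by rw [hx]; simp [Ne.symm hpq, Ne.symm hkq]
        have h2 : y i = β' := by rw [hy]; simp [Ne.symm hpq, Ne.symm hkq]
        rw [h1, h2]; exact ray_norm_add hβ
      · by_cases hik : i = k
        · subst hik
          have h1 : x i = γ := by rw [hx]; simp [hkp, hkq]
          have h2 : y i = γ' := by rw [hy]; simp [hkp, hkq]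
          rw [h1, h2]; exact ray_norm_add hγ
        · have h1 : x i = 0 := by rw [hx]; simp [hip, hiq, hik]
          have h2 : y i = 0 := by rw [hy]; simp [hip, hiq, hik]
          rw [h1, h2]; simp
  obtain ⟨μ, hμ, hpt⟩ := pointwise_of_pp (hpres x y hxy)
  refine ⟨μ, hμ, fun i => ?_⟩
  have e1 : T x i = t i p * α + t i q * β + t i k * γ := hTx α β γ i
  have e2 : T y i = t i p * α' + t i q * β' + t i k * γ' := hTx α' β' γ' i
  have h3 := hpt i
  rw [e1, e2] at h3
  exact h3

lemma L2
    (ht : ∀ (x : PiLp 1 (fun _ : Fin n => 𝕜)) (i : Fin n), T x i = ∑ j, t i j * x j)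
    (hpres : ∀ x y : PiLp 1 (fun _ : Fin n => 𝕜),
        ParallelPair 𝕜 x y → ParallelPair 𝕜 (T x) (T y))
    {i₀ p q k : Fin n} (hpq : p ≠ q) (hkp : k ≠ p) (hkq : k ≠ q)
    (ha : t i₀ p ≠ 0) (hb : t i₀ q ≠ 0)
    (hcol : ∀ i, t i q * t i₀ p = t i p * t i₀ q)
    (hk0 : t i₀ k = 0) : ∀ i₁, t i₁ k = 0 := by
  intro i₁
  by_contra hK
  by_cases hC : t i₁ p = 0
  · -- then also t i₁ q = 0
    have hd0 : t i₁ q = 0 := by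
      have h := hcol i₁
      rw [hC, zero_mul] at h
      rcases mul_eq_zero.mp h with h' | h'
      · exact h'
      · exact absurd h' ha
    obtain ⟨μ, hμ, hpt⟩ := conflict3 T t ht hpres hpq hkp hkq
      4 (-(3 * t i₀ p * (t i₀ q)⁻¹)) 1 2 (-(3 * t i₀ p * (t i₀ q)⁻¹)) 1
      ⟨2⁻¹, by norm_num, Or.inl (by
        rw [RCLike.real_smul_eq_coe_mul]; push_cast; norm_num)⟩
      ⟨1, zero_le_one, Or.inl (by simp)⟩
      ⟨1, zero_le_one, Or.inl (by simp)⟩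
    have h0 := hpt i₀
    have h1 := hpt i₁
    rw [show t i₀ p * 4 + t i₀ q * (-(3 * t i₀ p * (t i₀ q)⁻¹)) + t i₀ k * 1 = t i₀ p by
        rw [hk0]; field_simp <;> ring,
      show t i₀ p * 2 + t i₀ q * (-(3 * t i₀ p * (t i₀ q)⁻¹)) + t i₀ k * 1 = -(t i₀ p) by
        rw [hk0]; field_simp <;> ring] at h0
    have hμ1 : μ = -1 := force_neg ha hμ h0
    rw [show t i₁ p * 4 + t i₁ q * (-(3 * t i₀ p * (t i₀ q)⁻¹)) + t i₁ k * 1 = t i₁ k by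
        rw [hC, hd0]; ring,
      show t i₁ p * 2 + t i₁ q * (-(3 * t i₀ p * (t i₀ q)⁻¹)) + t i₁ k * 1 = t i₁ k by
        rw [hC, hd0]; ring] at h1
    have hμ2 : μ = 1 := force_one hK hμ h1
    rw [hμ2] at hμ1
    norm_num at hμ1
  · obtain ⟨μ, hμ, hpt⟩ := conflict3 T t ht hpres hpq hkp hkq
      0 (t i₀ p * (t i₀ q)⁻¹) 0 0 (t i₀ p * (t i₀ q)⁻¹) (-(2 * t i₁ p * (t i₁ k)⁻¹))
      ⟨1, zero_le_one, Or.inl (by simp)⟩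
      ⟨1, zero_le_one, Or.inl (by simp)⟩
      ⟨0, le_rfl, Or.inr (by simp)⟩
    have h0 := hpt i₀
    have h1 := hpt i₁
    rw [show t i₀ p * 0 + t i₀ q * (t i₀ p * (t i₀ q)⁻¹) + t i₀ k * 0 = t i₀ p by
        field_simp; ring,
      show t i₀ p * 0 + t i₀ q * (t i₀ p * (t i₀ q)⁻¹) + t i₀ k * (-(2 * t i₁ p * (t i₁ k)⁻¹))
          = t i₀ p by rw [hk0]; field_simp; ring] at h0
    have hμ1 : μ = 1 := force_one ha hμ h0
    have hcol1 := hcol i₁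
    have e1 : t i₁ q * (t i₀ p * (t i₀ q)⁻¹) = t i₁ p := by
      rw [show t i₁ q * (t i₀ p * (t i₀ q)⁻¹) = (t i₁ q * t i₀ p) * (t i₀ q)⁻¹ from by ring,
        hcol1, mul_assoc, mul_inv_cancel₀ hb, mul_one]
    have e2 : t i₁ k * (-(2 * t i₁ p * (t i₁ k)⁻¹)) = -(2 * t i₁ p) := by
      rw [show t i₁ k * (-(2 * t i₁ p * (t i₁ k)⁻¹)) = -(2 * t i₁ p) * (t i₁ k * (t i₁ k)⁻¹)
        from by ring, mul_inv_cancel₀ hK, mul_one]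
    rw [show t i₁ p * 0 + t i₁ q * (t i₀ p * (t i₀ q)⁻¹) + t i₁ k * 0 = t i₁ p by
        rw [e1]; ring,
      show t i₁ p * 0 + t i₁ q * (t i₀ p * (t i₀ q)⁻¹) + t i₁ k * (-(2 * t i₁ p * (t i₁ k)⁻¹))
          = -(t i₁ p) by rw [e1, e2]; ring] at h1
    have hμ2 : μ = -1 := force_neg hC hμ h1
    rw [hμ1] at hμ2
    norm_num at hμ2

lemma exists_mu (s s' : 𝕜) : ∃ μ : 𝕜, ‖μ‖ = 1 ∧ ‖s + μ * s'‖ = ‖s‖ + ‖s'‖ := by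
  by_cases hs' : s' = 0
  · exact ⟨1, norm_one, by simp [hs']⟩
  by_cases hs : s = 0
  · exact ⟨1, norm_one, by simp [hs]⟩
  have hsn : (‖s‖:ℝ) ≠ 0 := norm_ne_zero_iff.mpr hs
  have hs'n : (‖s'‖:ℝ) ≠ 0 := norm_ne_zero_iff.mpr hs'
  refine ⟨(s * (starRingEnd 𝕜) s') / ((‖s‖ * ‖s'‖ : ℝ):𝕜), ?_, ?_⟩
  · rw [norm_div, norm_mul, RCLike.norm_conj, RCLike.norm_ofReal,
      abs_of_nonneg (by positivity)]
    field_simp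
  · have hcc : (starRingEnd 𝕜) s' * s' = ((‖s'‖^2:ℝ):𝕜) := by
      rw [RCLike.conj_mul]; push_cast; ring
    have hmu : (s * (starRingEnd 𝕜) s') / ((‖s‖ * ‖s'‖ : ℝ):𝕜) * s'
        = ((‖s'‖/‖s‖ : ℝ):𝕜) * s := by
      rw [div_mul_eq_mul_div, mul_assoc, hcc]
      push_cast
      rw [div_eq_iff (by
        intro h
        rcases mul_eq_zero.mp h with h' | h'
        · exact hsn (by exact_mod_cast RCLike.ofReal_eq_zero.mp h')
        · exact hs'n (by exact_mod_cast RCLike.ofReal_eq_zero.mp h'))]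
      have hk : ((‖s‖:ℝ):𝕜) ≠ 0 := RCLike.ofReal_ne_zero.mpr hsn
      field_simp
    rw [hmu, show s + ((‖s'‖/‖s‖:ℝ):𝕜) * s = (((1 + ‖s'‖/‖s‖ : ℝ)):𝕜) * s by push_cast; ring,
      norm_mul, RCLike.norm_ofReal, abs_of_nonneg (by positivity)]
    field_simp <;> ring

lemma suff_rank1 (u v : Fin n → 𝕜)
    (huv : ∀ (x : PiLp 1 (fun _ : Fin n => 𝕜)) (i : Fin n),
      T x i = (∑ j, u j * x j) * v i) :
    ∀ x y : PiLp 1 (fun _ : Fin n => 𝕜),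
      ParallelPair 𝕜 x y → ParallelPair 𝕜 (T x) (T y) := by
  intro x y _
  obtain ⟨μ, hμ, hmu⟩ := exists_mu (∑ j, u j * x j) (∑ j, u j * y j)
  refine ⟨μ, hμ, ?_⟩
  rw [norm1, norm1, norm1]
  have e1 : ∀ i, ‖(T x + μ • T y) i‖ = ‖(∑ j, u j * x j) + μ * (∑ j, u j * y j)‖ * ‖v i‖ := by
    intro i
    have : (T x + μ • T y) i = ((∑ j, u j * x j) + μ * (∑ j, u j * y j)) * v i := by
      show T x i + μ * T y i = _
      rw [huv, huv]; ring
    rw [this, norm_mul]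
  have e2 : ∀ i, ‖T x i‖ = ‖(∑ j, u j * x j)‖ * ‖v i‖ := by
    intro i; rw [huv, norm_mul]
  have e3 : ∀ i, ‖T y i‖ = ‖(∑ j, u j * y j)‖ * ‖v i‖ := by
    intro i; rw [huv, norm_mul]
  simp only [e1, e2, e3, ← Finset.mul_sum]
  rw [hmu]
  ring

lemma suff_rows
    (ht : ∀ (x : PiLp 1 (fun _ : Fin n => 𝕜)) (i : Fin n), T x i = ∑ j, t i j * x j)
    (hrow : ∀ i j j' : Fin n, t i j ≠ 0 → t i j' ≠ 0 → j = j') :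
    ∀ x y : PiLp 1 (fun _ : Fin n => 𝕜),
      ParallelPair 𝕜 x y → ParallelPair 𝕜 (T x) (T y) := by
  intro x y hxy
  obtain ⟨μ, hμ, hpt⟩ := pointwise_of_pp hxy
  refine pp_of_pointwise hμ fun i => ?_
  by_cases hz : ∀ j, t i j = 0
  · have hzero : ∀ z : PiLp 1 (fun _ : Fin n => 𝕜), (∑ j, t i j * z j) = 0 := fun z =>
      Finset.sum_eq_zero fun j _ => by rw [hz j, zero_mul]
    rw [ht, ht, hzero, hzero]
    simp
  · push_neg at hz
    obtain ⟨j₀, hj₀⟩ := hz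
    have hsum : ∀ z : PiLp 1 (fun _ : Fin n => 𝕜), (∑ j, t i j * z j) = t i j₀ * z j₀ := by
      intro z
      refine Finset.sum_eq_single j₀ (fun j _ hjne => ?_) (fun h => absurd (Finset.mem_univ _) h)
      by_cases h : t i j = 0
      · rw [h, zero_mul]
      · exact absurd (hrow i j j₀ h hj₀) hjne
    rw [ht, ht, hsum, hsum,
      show t i j₀ * x j₀ + μ * (t i j₀ * y j₀) = t i j₀ * (x j₀ + μ * y j₀) from by ring,
      norm_mul, norm_mul, norm_mul, hpt j₀]
    ring

end
end L1PP

/-- Let `𝔽` be `ℝ` or `ℂ` and `n ≥ 1`.  A linear map `T` on `𝔽ⁿ` with the `ℓ₁`-norm,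
identified with its matrix `t`, preserves parallel pairs if and only if each row of `t`
has at most one nonzero entry, or `T = v uᵗ` for some column vectors `u, v ∈ 𝔽ⁿ`
(i.e. `Tx = (uᵗx) • v` for all `x`). -/
theorem l1_parallel_preserver_iff {𝕜 : Type*} [RCLike 𝕜] {n : ℕ} (hn : 1 ≤ n)
    (T : PiLp 1 (fun _ : Fin n => 𝕜) →ₗ[𝕜] PiLp 1 (fun _ : Fin n => 𝕜))
    (t : Matrix (Fin n) (Fin n) 𝕜)
    (ht : ∀ (x : PiLp 1 (fun _ : Fin n => 𝕜)) (i : Fin n), T x i = ∑ j, t i j * x j) :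
    (∀ x y : PiLp 1 (fun _ : Fin n => 𝕜),
        ParallelPair 𝕜 x y → ParallelPair 𝕜 (T x) (T y)) ↔
      ((∀ i j j' : Fin n, t i j ≠ 0 → t i j' ≠ 0 → j = j') ∨
        ∃ u v : Fin n → 𝕜, ∀ (x : PiLp 1 (fun _ : Fin n => 𝕜)) (i : Fin n),
          T x i = (∑ j, u j * x j) * v i) := by
  constructor
  · intro hpres
    by_cases hrow : ∀ i j j' : Fin n, t i j ≠ 0 → t i j' ≠ 0 → j = j'
    · exact Or.inl hrow
    · right
      push_neg at hrow
      obtain ⟨i₀, p, q, hp, hq, hpq⟩ := hrow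
      refine ⟨fun j => t i₀ j * (t i₀ p)⁻¹, fun i => t i p, ?_⟩
      have key : ∀ i j, t i j = (t i₀ j * (t i₀ p)⁻¹) * t i p := by
        intro i j
        by_cases hjp : j = p
        · subst hjp
          rw [mul_inv_cancel₀ hp, one_mul]
        · by_cases hj0 : t i₀ j = 0
          · have hjq : j ≠ q := by rintro rfl; exact hq hj0
            have hcolpq : ∀ i, t i q * t i₀ p = t i p * t i₀ q :=
              L1PP.L1 T t ht hpres hpq hp hq
            have hz := L1PP.L2 T t ht hpres hpq hjp hjq hp hq hcolpq hj0 i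
            rw [hz, hj0]
            ring
          · have hm := L1PP.L1 T t ht hpres (show p ≠ j from fun h => hjp h.symm) hp hj0 i
            field_simp
            linear_combination hm
      intro x i
      rw [ht, Finset.sum_mul]
      refine Finset.sum_congr rfl fun j _ => ?_
      rw [key i j]
      ring
  · rintro (hrow | ⟨u, v, huv⟩)
    · exact L1PP.suff_rows T t ht hrow
    · exact L1PP.suff_rank1 T u v huv
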